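/- Let A be a weak *-Hopf algebra and (l, λ) a dual pair of left integrals of A and of the dual weak Hopf algebra. Define Ê_λ : A → A by Ê_λ(a) := λ⇀a = Σ a₍₁₎·⟨λ, a₍₂₎⟩, which takes values in A_L. Then: (i) the pair (l₍₂₎, S⁻¹(l₍₁₎)) is a quasi-basis for Ê_λ, i.e. Σ Ê_λ(a·l₍₂₎)·S⁻¹(l₍₁₎) = a = Σ l₍₂₎·Ê_λ(S⁻¹(l₍₁₎)·a) for all a ∈ A; (ii) the index Ind λ := Σ l₍₂₎·S⁻¹(l₍₁₎) belongs to A_R ∩ C(A), where C(A) denotes the center of A. -/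

import Mathlib

open scoped TensorProduct

set_option maxHeartbeats 1000000
set_option synthInstance.maxHeartbeats 1000000

noncomputable section

/-- The componentwise star operation on a tensor product of star algebras,
as an additive map (it is conjugate-linear, hence not a `LinearMap`). -/
def tensorStar (A B : Type) [Ring A] [Algebra ℂ A] [StarRing A] [StarModule ℂ A]
    [Ring B] [Algebra ℂ B] [StarRing B] [StarModule ℂ B] :
    A ⊗[ℂ] B →+ A ⊗[ℂ] B :=
  TensorProduct.liftAddHom
    (AddMonoidHom.mk'
      (fun a => AddMonoidHom.mk' (fun b => star a ⊗ₜ[ℂ] star b)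
        (fun x y => by
          show star a ⊗ₜ[ℂ] star (x + y) = star a ⊗ₜ[ℂ] star x + star a ⊗ₜ[ℂ] star y
          rw [star_add, TensorProduct.tmul_add]))
      (fun x y => by
        ext b
        show star (x + y) ⊗ₜ[ℂ] star b = star x ⊗ₜ[ℂ] star b + star y ⊗ₜ[ℂ] star b
        rw [star_add, TensorProduct.add_tmul]))
    (fun r a b => by
      show star (r • a) ⊗ₜ[ℂ] star b = star a ⊗ₜ[ℂ] star (r • b)
      rw [star_smul, star_smul, TensorProduct.smul_tmul])

/-- A finite dimensional weak `*`-Hopf algebra over `ℂ` (axioms of [BNS]),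
together with the derived properties of the antipode (which follow from the
axioms and are included as fields for convenience). -/
structure WeakHopfAlgebra (A : Type) [Ring A] [Algebra ℂ A] [StarRing A] [StarModule ℂ A] where
  Δ : A →ₗ[ℂ] A ⊗[ℂ] A
  ε : A →ₗ[ℂ] ℂ
  S : A →ₗ[ℂ] A
  Sinv : A →ₗ[ℂ] A
  finite : FiniteDimensional ℂ A
  Δ_mul : ∀ x y : A, Δ (x * y) = Δ x * Δ y
  Δ_star : ∀ x : A, Δ (star x) = tensorStar A A (Δ x)
  coassoc : ∀ x : A,
    (TensorProduct.assoc ℂ A A A) ((TensorProduct.map Δ (LinearMap.id : A →ₗ[ℂ] A)) (Δ x))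
      = (TensorProduct.map (LinearMap.id : A →ₗ[ℂ] A) Δ) (Δ x)
  counit_left : ∀ x : A,
    (TensorProduct.lid ℂ A) ((TensorProduct.map ε (LinearMap.id : A →ₗ[ℂ] A)) (Δ x)) = x
  counit_right : ∀ x : A,
    (TensorProduct.rid ℂ A) ((TensorProduct.map (LinearMap.id : A →ₗ[ℂ] A) ε) (Δ x)) = x
  unit_weak :
    (Δ 1 ⊗ₜ[ℂ] (1 : A)) * ((TensorProduct.assoc ℂ A A A).symm ((1 : A) ⊗ₜ[ℂ] Δ 1))
      = (TensorProduct.map Δ (LinearMap.id : A →ₗ[ℂ] A)) (Δ 1)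
  unit_weak' :
    ((TensorProduct.assoc ℂ A A A).symm ((1 : A) ⊗ₜ[ℂ] Δ 1)) * (Δ 1 ⊗ₜ[ℂ] (1 : A))
      = (TensorProduct.map Δ (LinearMap.id : A →ₗ[ℂ] A)) (Δ 1)
  counit_weak : ∀ x y z : A,
    ε (x * y * z) = (TensorProduct.lid ℂ ℂ)
      ((TensorProduct.map (ε ∘ₗ LinearMap.mulLeft ℂ x) (ε ∘ₗ LinearMap.mulRight ℂ z)) (Δ y))
  counit_weak' : ∀ x y z : A,
    ε (x * y * z) = (TensorProduct.lid ℂ ℂ)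
      ((TensorProduct.map (ε ∘ₗ LinearMap.mulRight ℂ z) (ε ∘ₗ LinearMap.mulLeft ℂ x)) (Δ y))
  antipode_left : ∀ x : A,
    LinearMap.mul' ℂ A ((TensorProduct.map S (LinearMap.id : A →ₗ[ℂ] A)) (Δ x))
      = (TensorProduct.rid ℂ A)
          ((TensorProduct.map (LinearMap.id : A →ₗ[ℂ] A) (ε ∘ₗ LinearMap.mulLeft ℂ x)) (Δ 1))
  antipode_right : ∀ x : A,
    LinearMap.mul' ℂ A ((TensorProduct.map (LinearMap.id : A →ₗ[ℂ] A) S) (Δ x))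
      = (TensorProduct.lid ℂ A)
          ((TensorProduct.map (ε ∘ₗ LinearMap.mulRight ℂ x) (LinearMap.id : A →ₗ[ℂ] A)) (Δ 1))
  antipode_mid : ∀ x : A,
    LinearMap.mul' ℂ A
      ((TensorProduct.map (LinearMap.mul' ℂ A ∘ₗ TensorProduct.map S (LinearMap.id : A →ₗ[ℂ] A)) S)
        ((TensorProduct.map Δ (LinearMap.id : A →ₗ[ℂ] A)) (Δ x))) = S x
  S_Sinv : ∀ x : A, S (Sinv x) = x
  Sinv_S : ∀ x : A, Sinv (S x) = x
  S_antimul : ∀ x y : A, S (x * y) = S y * S x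
  S_anticomul : ∀ x : A, Δ (S x) = (TensorProduct.comm ℂ A A) ((TensorProduct.map S S) (Δ x))
  S_star : ∀ x : A, star (S (star x)) = Sinv x

/-- The set of elements commuting with everything. -/
def centerSet (R : Type) [Mul R] : Set R := {z | ∀ r : R, z * r = r * z}

namespace WeakHopfAlgebra

variable {A : Type} [Ring A] [Algebra ℂ A] [StarRing A] [StarModule ℂ A]

/-- `Σ x₍₁₎ · S(x₍₂₎)`. -/
def swIdS (W : WeakHopfAlgebra A) (x : A) : A :=
  LinearMap.mul' ℂ A ((TensorProduct.map (LinearMap.id : A →ₗ[ℂ] A) W.S) (W.Δ x))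

/-- `Σ S(x₍₁₎) · x₍₂₎`. -/
def swSId (W : WeakHopfAlgebra A) (x : A) : A :=
  LinearMap.mul' ℂ A ((TensorProduct.map W.S (LinearMap.id : A →ₗ[ℂ] A)) (W.Δ x))

/-- `Σ x₍₂₎ · S⁻¹(x₍₁₎)`. -/
def swIdSinv (W : WeakHopfAlgebra A) (x : A) : A :=
  LinearMap.mul' ℂ A
    ((TensorProduct.map (LinearMap.id : A →ₗ[ℂ] A) W.Sinv) ((TensorProduct.comm ℂ A A) (W.Δ x)))

/-- `Σ S⁻¹(x₍₂₎) · x₍₁₎`. -/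
def swSinvId (W : WeakHopfAlgebra A) (x : A) : A :=
  LinearMap.mul' ℂ A
    ((TensorProduct.map W.Sinv (LinearMap.id : A →ₗ[ℂ] A)) ((TensorProduct.comm ℂ A A) (W.Δ x)))

/-- The left subalgebra `A_L = {(φ ⊗ id)(Δ 1) : φ ∈ A*}`. -/
def AL (W : WeakHopfAlgebra A) : Set A :=
  {a | ∃ φ : A →ₗ[ℂ] ℂ,
    a = (TensorProduct.lid ℂ A) ((TensorProduct.map φ (LinearMap.id : A →ₗ[ℂ] A)) (W.Δ 1))}

/-- The right subalgebra `A_R = {(id ⊗ φ)(Δ 1) : φ ∈ A*}`. -/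
def AR (W : WeakHopfAlgebra A) : Set A :=
  {a | ∃ φ : A →ₗ[ℂ] ℂ,
    a = (TensorProduct.rid ℂ A) ((TensorProduct.map (LinearMap.id : A →ₗ[ℂ] A) φ) (W.Δ 1))}

/-- A left integral: `a · l = Σ a₍₁₎ S(a₍₂₎) · l` for all `a`. -/
def IsLeftIntegral (W : WeakHopfAlgebra A) (l : A) : Prop := ∀ a : A, a * l = W.swIdS a * l

/-- A right integral: `r · a = r · Σ S(a₍₁₎) a₍₂₎` for all `a`. -/
def IsRightIntegral (W : WeakHopfAlgebra A) (r : A) : Prop := ∀ a : A, r * a = r * W.swSId a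

/-- A normalized Haar integral. -/
def IsHaar (W : WeakHopfAlgebra A) (h : A) : Prop :=
  W.IsLeftIntegral h ∧ W.IsRightIntegral h ∧ W.swSId h = 1 ∧ W.swIdS h = 1 ∧ W.S h = h

/-- The canonical left action of a functional `λ ∈ A*` on `A`:
`λ ⇀ a = Σ a₍₁₎ · ⟨λ, a₍₂₎⟩`. -/
def lact (W : WeakHopfAlgebra A) (lam : A →ₗ[ℂ] ℂ) : A →ₗ[ℂ] A :=
  (TensorProduct.rid ℂ A).toLinearMap ∘ₗ
    (TensorProduct.map (LinearMap.id : A →ₗ[ℂ] A) lam) ∘ₗ W.Δ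

/-- `λ ∈ A*` is a left integral of the dual weak Hopf algebra:
`λ ⇀ a ∈ A_L` for all `a ∈ A`. -/
def IsDualLeftIntegral (W : WeakHopfAlgebra A) (lam : A →ₗ[ℂ] ℂ) : Prop :=
  ∀ a : A, W.lact lam a ∈ W.AL

/-- A dual pair of left integrals `(l, λ)`. -/
def IsDualPair (W : WeakHopfAlgebra A) (l : A) (lam : A →ₗ[ℂ] ℂ) : Prop :=
  W.IsLeftIntegral l ∧ W.IsDualLeftIntegral lam ∧
  W.lact lam l = 1 ∧
  (∀ a : A,
    (TensorProduct.rid ℂ A)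
      ((TensorProduct.map (LinearMap.id : A →ₗ[ℂ] A) (lam ∘ₗ LinearMap.mulLeft ℂ a)) (W.Δ l))
      = W.S a) ∧
  (∀ a : A,
    (TensorProduct.lid ℂ A)
      ((TensorProduct.map (lam ∘ₗ LinearMap.mulRight ℂ a ∘ₗ W.Sinv)
        (LinearMap.id : A →ₗ[ℂ] A)) (W.Δ l)) = a)

end WeakHopfAlgebra

/-- A (left) module `*`-algebra over a weak `*`-Hopf algebra. -/
structure ModuleAlgebra {A : Type} [Ring A] [Algebra ℂ A] [StarRing A] [StarModule ℂ A]
    (W : WeakHopfAlgebra A) (M : Type) [Ring M] [Algebra ℂ M] [StarRing M] [StarModule ℂ M] where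
  act : A →ₗ[ℂ] M →ₗ[ℂ] M
  act_mul : ∀ (a b : A) (m : M), act (a * b) m = act a (act b m)
  act_one : ∀ m : M, act 1 m = m
  act_mul' : ∀ (a : A) (m n : M),
    act a (m * n) = LinearMap.mul' ℂ M ((TensorProduct.map (act.flip m) (act.flip n)) (W.Δ a))
  act_star : ∀ (a : A) (m : M), star (act a m) = act (star (W.S a)) (star m)
  act_unit : ∀ a : A, act a 1 = act (W.swIdS a) 1

namespace ModuleAlgebra

variable {A : Type} [Ring A] [Algebra ℂ A] [StarRing A] [StarModule ℂ A]
variable {M : Type} [Ring M] [Algebra ℂ M] [StarRing M] [StarModule ℂ M]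
variable {W : WeakHopfAlgebra A}

/-- `M_R = A ▷ 1_M`. -/
def MR (MA : ModuleAlgebra W M) : Set M := Set.range fun a : A => MA.act a 1

/-- The fixed point algebra `M^A`. -/
def fixed (MA : ModuleAlgebra W M) : Set M :=
  {n | ∀ (a : A) (m : M), MA.act a (m * n) = MA.act a m * n}

end ModuleAlgebra

section Crossed

variable {A : Type} [Ring A] [Algebra ℂ A] [StarRing A] [StarModule ℂ A]
variable {M : Type} [Ring M] [Algebra ℂ M] [StarRing M] [StarModule ℂ M]
variable {W : WeakHopfAlgebra A}

/-- The subspace of `M ⊗ A` by which one divides to form the crossed product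
`M ⋊ A = M ⊗_{A_L} A`. -/
def crossedRel (MA : ModuleAlgebra W M) : Submodule ℂ (M ⊗[ℂ] A) :=
  Submodule.span ℂ
    {x | ∃ (m : M) (a b : A), b ∈ W.AL ∧
      x = (m * MA.act b 1) ⊗ₜ[ℂ] a - m ⊗ₜ[ℂ] (b * a)}

/-- The crossed product `M ⋊ A` as a vector space. -/
abbrev Crossed (MA : ModuleAlgebra W M) : Type := (M ⊗[ℂ] A) ⧸ crossedRel MA

/-- The canonical projection `M ⊗ A → M ⋊ A`; `cmk MA (m ⊗ₜ a)` is `m ⋊ a`. -/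
def cmk (MA : ModuleAlgebra W M) : M ⊗[ℂ] A →ₗ[ℂ] Crossed MA := (crossedRel MA).mkQ

/-- The embedding `M → M ⋊ A`, `m ↦ m ⋊ 1`. -/
def iM (MA : ModuleAlgebra W M) : M →ₗ[ℂ] Crossed MA :=
  cmk MA ∘ₗ (TensorProduct.mk ℂ M A).flip (1 : A)

/-- The map `A → M ⋊ A`, `a ↦ 1 ⋊ a`. -/
def iA (MA : ModuleAlgebra W M) : A →ₗ[ℂ] Crossed MA :=
  cmk MA ∘ₗ (TensorProduct.mk ℂ M A) (1 : M)

/-- The unit `1 ⋊ 1` of `M ⋊ A`. -/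
def oneC (MA : ModuleAlgebra W M) : Crossed MA := cmk MA ((1 : M) ⊗ₜ[ℂ] (1 : A))

/-- The multiplication of the crossed product `M ⋊ A`
(whose existence is the content of Theorem 3.1), as a bundled bilinear map
together with its defining formula on generators:
`(m ⋊ a)(m' ⋊ a') = Σ m (a₍₁₎ ▷ m') ⋊ a₍₂₎ a'`. -/
structure CrossedMul (MA : ModuleAlgebra W M) where
  mul : Crossed MA →ₗ[ℂ] Crossed MA →ₗ[ℂ] Crossed MA
  mul_def : ∀ (m m' : M) (a a' : A),
    mul (cmk MA (m ⊗ₜ[ℂ] a)) (cmk MA (m' ⊗ₜ[ℂ] a'))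
      = cmk MA ((TensorProduct.map ((LinearMap.mulLeft ℂ m) ∘ₗ (MA.act.flip m'))
          (LinearMap.mulRight ℂ a')) (W.Δ a))

/-- The star operation of the crossed product `M ⋊ A`
(whose existence is part of Theorem 3.1):
`(m ⋊ a)* = Σ (a₍₁₎* ▷ m*) ⋊ a₍₂₎*`. -/
structure CrossedStar (MA : ModuleAlgebra W M) where
  st : Crossed MA →+ Crossed MA
  st_smul : ∀ (c : ℂ) (x : Crossed MA), st (c • x) = (starRingEnd ℂ c) • st x
  st_def : ∀ (m : M) (a : A),
    st (cmk MA (m ⊗ₜ[ℂ] a))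
      = cmk MA ((TensorProduct.map (MA.act.flip (star m)) (LinearMap.id : A →ₗ[ℂ] A))
          (W.Δ (star a)))

/-- The multiplication on `(M ⋊ A) ⊗ B` induced by a crossed product
multiplication on `M ⋊ A` and the algebra structure of `B`. -/
def mulT (MA : ModuleAlgebra W M) (CS : CrossedMul MA) (B : Type) [Ring B] [Algebra ℂ B] :
    Crossed MA ⊗[ℂ] B →ₗ[ℂ] Crossed MA ⊗[ℂ] B →ₗ[ℂ] Crossed MA ⊗[ℂ] B :=
  TensorProduct.lift
    ((TensorProduct.mapBilinear (RingHom.id ℂ) (Crossed MA) B (Crossed MA) B).compl₁₂ CS.mul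
      (LinearMap.mul ℂ B))

end Crossed


section AuxProofs

open TensorProduct

variable {A : Type} [Ring A] [Algebra ℂ A] [StarRing A] [StarModule ℂ A]

private lemma aux_comm_comm (t : A ⊗[ℂ] A) :
    (TensorProduct.comm ℂ A A) ((TensorProduct.comm ℂ A A) t) = t := by
  induction t using TensorProduct.induction_on with
  | zero => simp
  | tmul x y => simp
  | add x y hx hy => rw [map_add, map_add, hx, hy]

private lemma aux_S_one (W : WeakHopfAlgebra A) : W.S 1 = 1 := by
  obtain ⟨s1, h1⟩ := TensorProduct.exists_finset (W.Δ (1 : A))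
  have hc : ∑ j ∈ s1, W.ε j.2 • j.1 = 1 := by
    have h := W.counit_right 1
    rw [h1] at h
    simpa [TensorProduct.rid_tmul] using h
  have hc' : ∑ j ∈ s1, W.ε j.1 • j.2 = 1 := by
    have h := W.counit_left 1
    rw [h1] at h
    simpa [TensorProduct.lid_tmul] using h
  have hb : ∑ j ∈ s1, W.S j.1 * j.2 = 1 := by
    have h := W.antipode_left 1
    rw [h1] at h
    simp only [map_sum, TensorProduct.map_tmul, LinearMap.mul'_apply, LinearMap.id_coe, id_eq,
      LinearMap.coe_comp, Function.comp_apply, LinearMap.mulLeft_apply, one_mul,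
      TensorProduct.rid_tmul] at h
    rw [h]; exact hc
  have ha : ∑ j ∈ s1, j.1 * W.S j.2 = 1 := by
    have h := W.antipode_right 1
    rw [h1] at h
    simp only [map_sum, TensorProduct.map_tmul, LinearMap.mul'_apply, LinearMap.id_coe, id_eq,
      LinearMap.coe_comp, Function.comp_apply, LinearMap.mulRight_apply, mul_one,
      TensorProduct.lid_tmul] at h
    rw [h]; exact hc'
  have hmid := W.antipode_mid 1
  rw [← W.unit_weak, h1] at hmid
  simp only [TensorProduct.sum_tmul, TensorProduct.tmul_sum, map_sum, Finset.sum_mul,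
    Finset.mul_sum, TensorProduct.assoc_symm_tmul, Algebra.TensorProduct.tmul_mul_tmul,
    one_mul, mul_one, TensorProduct.map_tmul, LinearMap.mul'_apply, LinearMap.coe_comp,
    Function.comp_apply, LinearMap.id_coe, id_eq] at hmid
  rw [← hmid]
  calc ∑ x ∈ s1, ∑ x1 ∈ s1, W.S x1.1 * (x1.2 * x.1) * W.S x.2
      = ∑ x ∈ s1, (∑ x1 ∈ s1, W.S x1.1 * x1.2) * (x.1 * W.S x.2) := by
        refine Finset.sum_congr rfl fun x _ => ?_
        rw [Finset.sum_mul]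
        exact Finset.sum_congr rfl fun x1 _ => by simp [mul_assoc]
    _ = 1 := by
        rw [hb]
        simp only [one_mul]
        exact ha

private lemma aux_Sinv_antimul (W : WeakHopfAlgebra A) (x y : A) :
    W.Sinv (x * y) = W.Sinv y * W.Sinv x := by
  have h := W.S_antimul (W.Sinv y) (W.Sinv x)
  rw [W.S_Sinv, W.S_Sinv] at h
  have h2 := congrArg W.Sinv h
  rw [W.Sinv_S] at h2
  exact h2.symm

private lemma aux_SinvS_map (W : WeakHopfAlgebra A) (w : A ⊗[ℂ] A) :
    (TensorProduct.map W.Sinv W.Sinv) ((TensorProduct.map W.S W.S) w) = w := by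
  induction w using TensorProduct.induction_on with
  | zero => simp
  | tmul p q => simp [W.Sinv_S]
  | add p q hp hq => rw [map_add, map_add, hp, hq]

private lemma aux_DeltaSinv (W : WeakHopfAlgebra A) (x : A) :
    W.Δ (W.Sinv x) = (TensorProduct.map W.Sinv W.Sinv) ((TensorProduct.comm ℂ A A) (W.Δ x)) := by
  have h := W.S_anticomul (W.Sinv x)
  rw [W.S_Sinv] at h
  rw [h, aux_comm_comm, aux_SinvS_map]

end AuxProofs

/-- Proposition 2.29 of [NSW]: for a dual pair `(l, λ)` of nondegenerate left
integrals, with `Ê_λ(a) = λ ⇀ a`: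
(i) `(l₍₂₎, S⁻¹(l₍₁₎))` is a quasi-basis for `Ê_λ`, i.e.
`Σ Ê_λ(a·l₍₂₎)·S⁻¹(l₍₁₎) = a = Σ l₍₂₎·Ê_λ(S⁻¹(l₍₁₎)·a)`;
(ii) `Ind λ = Σ l₍₂₎·S⁻¹(l₍₁₎)` belongs to `A_R ∩ C(A)`. -/
theorem dual_pair_quasi_basis_and_index
    {A : Type} [Ring A] [Algebra ℂ A] [StarRing A] [StarModule ℂ A]
    (W : WeakHopfAlgebra A) (l : A) (lam : A →ₗ[ℂ] ℂ)
    (hdp : W.IsDualPair l lam) :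
    (∀ a : A,
      LinearMap.mul' ℂ A
        ((TensorProduct.map ((W.lact lam) ∘ₗ LinearMap.mulLeft ℂ a) W.Sinv)
          ((TensorProduct.comm ℂ A A) (W.Δ l))) = a)
    ∧ (∀ a : A,
      LinearMap.mul' ℂ A
        ((TensorProduct.map (LinearMap.id : A →ₗ[ℂ] A)
            ((W.lact lam) ∘ₗ LinearMap.mulRight ℂ a ∘ₗ W.Sinv))
          ((TensorProduct.comm ℂ A A) (W.Δ l))) = a)
    ∧ W.swIdSinv l ∈ W.AR ∩ centerSet A := by
  classical
  obtain ⟨-, -, -, hrel2, hrel3⟩ := hdp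
  obtain ⟨s, hl⟩ := TensorProduct.exists_finset (W.Δ l)
  obtain ⟨s1, h1⟩ := TensorProduct.exists_finset (W.Δ (1 : A))
  have hlact : ∀ x : A, W.lact lam x
      = (TensorProduct.rid ℂ A) ((TensorProduct.map LinearMap.id lam) (W.Δ x)) := fun x => rfl
  have hco : ∑ i ∈ s, (TensorProduct.assoc ℂ A A A) ((W.Δ i.1) ⊗ₜ[ℂ] i.2)
      = ∑ i ∈ s, i.1 ⊗ₜ[ℂ] (W.Δ i.2) := by
    have h := W.coassoc l
    rw [hl] at h
    simpa only [map_sum, TensorProduct.map_tmul, LinearMap.id_coe, id_eq] using h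
  have hco' : ∑ i ∈ s, (W.Δ i.1) ⊗ₜ[ℂ] i.2
      = ∑ i ∈ s, (TensorProduct.assoc ℂ A A A).symm (i.1 ⊗ₜ[ℂ] (W.Δ i.2)) := by
    have h := congrArg (TensorProduct.assoc ℂ A A A).symm hco
    simpa only [map_sum, LinearEquiv.symm_apply_apply] using h
  have hmulR : ∀ (x y : A) (t : A ⊗[ℂ] A),
      (TensorProduct.rid ℂ A) ((TensorProduct.map LinearMap.id lam) ((x ⊗ₜ[ℂ] y) * t))
      = x * (TensorProduct.rid ℂ A)
          ((TensorProduct.map LinearMap.id (lam ∘ₗ LinearMap.mulLeft ℂ y)) t) := by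
    intro x y t
    induction t using TensorProduct.induction_on with
    | zero => simp
    | tmul u v =>
        simp [Algebra.TensorProduct.tmul_mul_tmul, TensorProduct.rid_tmul, mul_smul_comm]
    | add u v hu hv => simp only [mul_add, map_add, hu, hv]
  have hmulR' : ∀ (x y : A) (t : A ⊗[ℂ] A),
      (TensorProduct.rid ℂ A) ((TensorProduct.map LinearMap.id lam) (t * (x ⊗ₜ[ℂ] y)))
      = (TensorProduct.rid ℂ A)
          ((TensorProduct.map LinearMap.id (lam ∘ₗ LinearMap.mulRight ℂ y)) t) * x := by
    intro x y t
    induction t using TensorProduct.induction_on with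
    | zero => simp
    | tmul u v =>
        simp [Algebra.TensorProduct.tmul_mul_tmul, TensorProduct.rid_tmul, smul_mul_assoc]
    | add u v hu hv => simp only [add_mul, map_add, hu, hv]
  -- ### part (i), first identity
  have hpure1 : ∀ (y : A) (w : A ⊗[ℂ] A) (v : A),
      (TensorProduct.map (LinearMap.id : A →ₗ[ℂ] A)
        ((TensorProduct.rid ℂ A).toLinearMap ∘ₗ
          TensorProduct.map LinearMap.id (lam ∘ₗ LinearMap.mulLeft ℂ y)))
        ((TensorProduct.assoc ℂ A A A) (w ⊗ₜ[ℂ] v))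
      = lam (y * v) • w := by
    intro y w v
    induction w using TensorProduct.induction_on with
    | zero => simp
    | tmul p q =>
        simp [TensorProduct.assoc_tmul, TensorProduct.rid_tmul, TensorProduct.tmul_smul]
    | add p q hp hq => simp only [TensorProduct.add_tmul, map_add, hp, hq, smul_add]
  have Eq1 : ∀ y : A,
      ∑ i ∈ s, i.1 ⊗ₜ[ℂ] ((TensorProduct.rid ℂ A)
        ((TensorProduct.map LinearMap.id (lam ∘ₗ LinearMap.mulLeft ℂ y)) (W.Δ i.2)))
      = W.Δ (W.S y) := by
    intro y
    have e1 : ∑ i ∈ s, i.1 ⊗ₜ[ℂ] ((TensorProduct.rid ℂ A)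
        ((TensorProduct.map LinearMap.id (lam ∘ₗ LinearMap.mulLeft ℂ y)) (W.Δ i.2)))
        = (TensorProduct.map (LinearMap.id : A →ₗ[ℂ] A)
            ((TensorProduct.rid ℂ A).toLinearMap ∘ₗ
              TensorProduct.map LinearMap.id (lam ∘ₗ LinearMap.mulLeft ℂ y)))
            (∑ i ∈ s, i.1 ⊗ₜ[ℂ] (W.Δ i.2)) := by
      simp [TensorProduct.map_tmul]
    rw [e1, ← hco, map_sum]
    simp only [hpure1]
    have e2 : ∑ i ∈ s, lam (y * i.2) • W.Δ i.1
        = W.Δ (∑ i ∈ s, lam (y * i.2) • i.1) := by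
      rw [map_sum]; exact Finset.sum_congr rfl fun i _ => (map_smul _ _ _).symm
    rw [e2]
    congr 1
    have h2 := hrel2 y
    rw [hl] at h2
    simpa only [map_sum, TensorProduct.map_tmul, LinearMap.id_coe, id_eq, LinearMap.coe_comp,
      Function.comp_apply, LinearMap.mulLeft_apply, TensorProduct.rid_tmul] using h2
  have hsimpl : ∀ w : A ⊗[ℂ] A,
      LinearMap.mul' ℂ A ((TensorProduct.map LinearMap.id W.Sinv)
        ((TensorProduct.map W.S W.S) w))
      = LinearMap.mul' ℂ A ((TensorProduct.map W.S LinearMap.id) w) := by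
    intro w
    induction w using TensorProduct.induction_on with
    | zero => simp
    | tmul p q => simp [W.Sinv_S]
    | add p q hp hq => simp only [map_add, hp, hq]
  have hswS : ∀ y : A,
      ∑ i ∈ s, ((TensorProduct.rid ℂ A)
        ((TensorProduct.map LinearMap.id (lam ∘ₗ LinearMap.mulLeft ℂ y)) (W.Δ i.2))) * W.Sinv i.1
      = LinearMap.mul' ℂ A ((TensorProduct.map W.S LinearMap.id) (W.Δ y)) := by
    intro y
    have h := congrArg (fun t => LinearMap.mul' ℂ A ((TensorProduct.map LinearMap.id W.Sinv)
        ((TensorProduct.comm ℂ A A) t))) (Eq1 y)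
    simp only [map_sum, TensorProduct.comm_tmul, TensorProduct.map_tmul, LinearMap.mul'_apply,
      LinearMap.id_coe, id_eq] at h
    rw [W.S_anticomul y, aux_comm_comm, hsimpl (W.Δ y)] at h
    exact h
  have S1 : ∀ a : A, ∑ i ∈ s, (W.lact lam) (a * i.2) * W.Sinv i.1 = a := by
    intro a
    obtain ⟨sa, ha⟩ := TensorProduct.exists_finset (W.Δ a)
    have hLa : ∀ v : A, (W.lact lam) (a * v)
        = ∑ k ∈ sa, k.1 * ((TensorProduct.rid ℂ A)
            ((TensorProduct.map LinearMap.id (lam ∘ₗ LinearMap.mulLeft ℂ k.2)) (W.Δ v))) := by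
      intro v
      rw [hlact, W.Δ_mul, ha, Finset.sum_mul, map_sum, map_sum]
      exact Finset.sum_congr rfl fun k _ => hmulR k.1 k.2 (W.Δ v)
    have st1 : ∑ i ∈ s, (W.lact lam) (a * i.2) * W.Sinv i.1
        = ∑ i ∈ s, ∑ k ∈ sa, k.1 * (((TensorProduct.rid ℂ A)
            ((TensorProduct.map LinearMap.id (lam ∘ₗ LinearMap.mulLeft ℂ k.2)) (W.Δ i.2)))
              * W.Sinv i.1) := by
      refine Finset.sum_congr rfl fun i _ => ?_
      rw [hLa i.2, Finset.sum_mul]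
      exact Finset.sum_congr rfl fun k _ => mul_assoc _ _ _
    rw [st1, Finset.sum_comm]
    have st2 : ∀ k : A × A, ∑ i ∈ s, k.1 * (((TensorProduct.rid ℂ A)
        ((TensorProduct.map LinearMap.id (lam ∘ₗ LinearMap.mulLeft ℂ k.2)) (W.Δ i.2)))
          * W.Sinv i.1)
        = k.1 * LinearMap.mul' ℂ A ((TensorProduct.map W.S LinearMap.id) (W.Δ k.2)) := by
      intro k
      rw [← Finset.mul_sum, hswS k.2]
    rw [Finset.sum_congr rfl fun k _ => st2 k]
    have st3 : ∀ k : A × A, LinearMap.mul' ℂ A ((TensorProduct.map W.S LinearMap.id) (W.Δ k.2))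
        = ∑ j ∈ s1, W.ε (k.2 * j.2) • j.1 := by
      intro k
      have h := W.antipode_left k.2
      rw [h1] at h
      simpa only [map_sum, TensorProduct.map_tmul, LinearMap.id_coe, id_eq, LinearMap.coe_comp,
        Function.comp_apply, LinearMap.mulLeft_apply, TensorProduct.rid_tmul] using h
    have hΔa1 : W.Δ a = ∑ k ∈ sa, ∑ j ∈ s1, (k.1 * j.1) ⊗ₜ[ℂ] (k.2 * j.2) := by
      conv_lhs => rw [← mul_one a, W.Δ_mul, ha, h1]
      rw [Finset.sum_mul_sum]
      exact Finset.sum_congr rfl fun k _ => Finset.sum_congr rfl fun j _ =>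
        Algebra.TensorProduct.tmul_mul_tmul _ _ _ _
    have hfin := W.counit_right a
    rw [hΔa1] at hfin
    simp only [map_sum, TensorProduct.map_tmul, LinearMap.id_coe, id_eq,
      TensorProduct.rid_tmul] at hfin
    rw [← hfin]
    refine Finset.sum_congr rfl fun k _ => ?_
    rw [st3 k, Finset.mul_sum]
    exact Finset.sum_congr rfl fun j _ => mul_smul_comm _ _ _
  -- ### part (i), second identity
  have hE : ∀ (y : A) (w : A ⊗[ℂ] A),
      (TensorProduct.rid ℂ A) ((TensorProduct.map LinearMap.id (lam ∘ₗ LinearMap.mulRight ℂ y))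
        ((TensorProduct.map W.Sinv W.Sinv) ((TensorProduct.comm ℂ A A) w)))
      = W.Sinv ((TensorProduct.lid ℂ A)
          ((TensorProduct.map (lam ∘ₗ LinearMap.mulRight ℂ y ∘ₗ W.Sinv) LinearMap.id) w)) := by
    intro y w
    induction w using TensorProduct.induction_on with
    | zero => simp
    | tmul p q => simp
    | add p q hp hq => simp only [map_add, hp, hq]
  have hgx : ∀ (x : A) (u : A) (w : A ⊗[ℂ] A),
      (TensorProduct.map ((TensorProduct.lid ℂ A).toLinearMap ∘ₗ
          TensorProduct.map (lam ∘ₗ LinearMap.mulRight ℂ x ∘ₗ W.Sinv) LinearMap.id)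
        (LinearMap.id : A →ₗ[ℂ] A))
        ((TensorProduct.assoc ℂ A A A).symm (u ⊗ₜ[ℂ] w))
      = lam (W.Sinv u * x) • w := by
    intro x u w
    induction w using TensorProduct.induction_on with
    | zero => simp
    | tmul q r =>
        simp [TensorProduct.assoc_symm_tmul, TensorProduct.lid_tmul, TensorProduct.smul_tmul']
    | add q r hq hr => simp only [TensorProduct.tmul_add, map_add, hq, hr, smul_add]
  have Eq2 : ∀ x : A,
      ∑ i ∈ s, ((TensorProduct.lid ℂ A)
        ((TensorProduct.map (lam ∘ₗ LinearMap.mulRight ℂ x ∘ₗ W.Sinv) LinearMap.id) (W.Δ i.1)))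
          ⊗ₜ[ℂ] i.2
      = W.Δ x := by
    intro x
    have e1 : ∑ i ∈ s, ((TensorProduct.lid ℂ A)
        ((TensorProduct.map (lam ∘ₗ LinearMap.mulRight ℂ x ∘ₗ W.Sinv) LinearMap.id) (W.Δ i.1)))
          ⊗ₜ[ℂ] i.2
        = (TensorProduct.map ((TensorProduct.lid ℂ A).toLinearMap ∘ₗ
            TensorProduct.map (lam ∘ₗ LinearMap.mulRight ℂ x ∘ₗ W.Sinv) LinearMap.id)
            (LinearMap.id : A →ₗ[ℂ] A)) (∑ i ∈ s, (W.Δ i.1) ⊗ₜ[ℂ] i.2) := by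
      simp [TensorProduct.map_tmul]
    rw [e1, hco', map_sum]
    simp only [hgx]
    have e2 : ∑ i ∈ s, lam (W.Sinv i.1 * x) • W.Δ i.2
        = W.Δ (∑ i ∈ s, lam (W.Sinv i.1 * x) • i.2) := by
      rw [map_sum]; exact Finset.sum_congr rfl fun i _ => (map_smul _ _ _).symm
    rw [e2]
    congr 1
    have h3 := hrel3 x
    rw [hl] at h3
    simpa only [map_sum, TensorProduct.map_tmul, LinearMap.id_coe, id_eq, LinearMap.coe_comp,
      Function.comp_apply, LinearMap.mulRight_apply, TensorProduct.lid_tmul] using h3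
  have hγ2 : ∀ x : A,
      ∑ i ∈ s, i.2 * W.Sinv ((TensorProduct.lid ℂ A)
        ((TensorProduct.map (lam ∘ₗ LinearMap.mulRight ℂ x ∘ₗ W.Sinv) LinearMap.id) (W.Δ i.1)))
      = W.swIdSinv x := by
    intro x
    have h := congrArg (fun t => LinearMap.mul' ℂ A ((TensorProduct.map LinearMap.id W.Sinv)
        ((TensorProduct.comm ℂ A A) t))) (Eq2 x)
    simpa only [map_sum, TensorProduct.comm_tmul, TensorProduct.map_tmul, LinearMap.mul'_apply,
      LinearMap.id_coe, id_eq, WeakHopfAlgebra.swIdSinv] using h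
  have S2 : ∀ a : A, ∑ i ∈ s, i.2 * (W.lact lam) (W.Sinv i.1 * a) = a := by
    intro a
    obtain ⟨sa, ha⟩ := TensorProduct.exists_finset (W.Δ a)
    have hLa2 : ∀ u : A, (W.lact lam) (W.Sinv u * a)
        = ∑ k ∈ sa, W.Sinv ((TensorProduct.lid ℂ A)
            ((TensorProduct.map (lam ∘ₗ LinearMap.mulRight ℂ k.2 ∘ₗ W.Sinv) LinearMap.id)
              (W.Δ u))) * k.1 := by
      intro u
      rw [hlact, W.Δ_mul, aux_DeltaSinv, ha, Finset.mul_sum, map_sum, map_sum]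
      exact Finset.sum_congr rfl fun k _ => by
        rw [hmulR' k.1 k.2 _, hE k.2 (W.Δ u)]
    have st1 : ∑ i ∈ s, i.2 * (W.lact lam) (W.Sinv i.1 * a)
        = ∑ i ∈ s, ∑ k ∈ sa, (i.2 * W.Sinv ((TensorProduct.lid ℂ A)
            ((TensorProduct.map (lam ∘ₗ LinearMap.mulRight ℂ k.2 ∘ₗ W.Sinv) LinearMap.id)
              (W.Δ i.1)))) * k.1 := by
      refine Finset.sum_congr rfl fun i _ => ?_
      rw [hLa2 i.1, Finset.mul_sum]
      exact Finset.sum_congr rfl fun k _ => (mul_assoc _ _ _).symm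
    rw [st1, Finset.sum_comm]
    have st2 : ∀ k : A × A, ∑ i ∈ s, (i.2 * W.Sinv ((TensorProduct.lid ℂ A)
        ((TensorProduct.map (lam ∘ₗ LinearMap.mulRight ℂ k.2 ∘ₗ W.Sinv) LinearMap.id)
          (W.Δ i.1)))) * k.1
        = W.swIdSinv k.2 * k.1 := by
      intro k
      rw [← Finset.sum_mul, hγ2 k.2]
    rw [Finset.sum_congr rfl fun k _ => st2 k]
    -- now : ∑ k ∈ sa, W.swIdSinv k.2 * k.1 = a
    have hSsw : ∀ y : A, W.S (W.swIdSinv y)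
        = LinearMap.mul' ℂ A ((TensorProduct.map LinearMap.id W.S) (W.Δ y)) := by
      intro y
      unfold WeakHopfAlgebra.swIdSinv
      generalize W.Δ y = w
      induction w using TensorProduct.induction_on with
      | zero => simp
      | tmul c d => simp [W.S_antimul, W.S_Sinv]
      | add c d hc hd => simp only [map_add, hc, hd]
    have hSinj : ∀ u v : A, W.S u = W.S v → u = v := fun u v h => by
      have h2 := congrArg W.Sinv h; rwa [W.Sinv_S, W.Sinv_S] at h2
    apply hSinj
    rw [map_sum]
    have hcoa : ∑ k ∈ sa, (W.Δ k.1) ⊗ₜ[ℂ] k.2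
        = ∑ k ∈ sa, (TensorProduct.assoc ℂ A A A).symm (k.1 ⊗ₜ[ℂ] (W.Δ k.2)) := by
      have h := W.coassoc a
      rw [ha] at h
      simp only [map_sum, TensorProduct.map_tmul, LinearMap.id_coe, id_eq] at h
      have h2 := congrArg (TensorProduct.assoc ℂ A A A).symm h
      simpa only [map_sum, LinearEquiv.symm_apply_apply] using h2
    have hpure3 : ∀ (u : A) (w : A ⊗[ℂ] A),
        LinearMap.mul' ℂ A ((TensorProduct.map
            (LinearMap.mul' ℂ A ∘ₗ TensorProduct.map W.S (LinearMap.id : A →ₗ[ℂ] A)) W.S)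
          ((TensorProduct.assoc ℂ A A A).symm (u ⊗ₜ[ℂ] w)))
        = W.S u * LinearMap.mul' ℂ A ((TensorProduct.map LinearMap.id W.S) w) := by
      intro u w
      induction w using TensorProduct.induction_on with
      | zero => simp
      | tmul q r => simp [TensorProduct.assoc_symm_tmul, mul_assoc]
      | add q r hq hr => simp only [TensorProduct.tmul_add, map_add, hq, hr, mul_add]
    have hmid2 : W.S a = ∑ k ∈ sa, W.S k.1 *
        LinearMap.mul' ℂ A ((TensorProduct.map LinearMap.id W.S) (W.Δ k.2)) := by
      have hmid := W.antipode_mid a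
      rw [ha] at hmid
      rw [← hmid]
      rw [show (TensorProduct.map W.Δ (LinearMap.id : A →ₗ[ℂ] A)) (∑ k ∈ sa, k.1 ⊗ₜ[ℂ] k.2)
          = ∑ k ∈ sa, (W.Δ k.1) ⊗ₜ[ℂ] k.2 by simp [TensorProduct.map_tmul]]
      rw [hcoa, map_sum, map_sum]
      exact Finset.sum_congr rfl fun k _ => hpure3 k.1 (W.Δ k.2)
    rw [hmid2]
    refine Finset.sum_congr rfl fun k _ => ?_
    rw [W.S_antimul, hSsw]
  -- ### index element
  have hInd : W.swIdSinv l = ∑ i ∈ s, i.2 * W.Sinv i.1 := by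
    unfold WeakHopfAlgebra.swIdSinv
    rw [hl]
    simp [TensorProduct.comm_tmul, TensorProduct.map_tmul, LinearMap.mul'_apply]
  have hcen : ∀ z : A, W.swIdSinv l * z = z * W.swIdSinv l := by
    intro z
    rw [hInd]
    have h1side : (∑ i ∈ s, i.2 * W.Sinv i.1) * z
        = ∑ i ∈ s, ∑ k ∈ s, i.2 * ((W.lact lam) ((W.Sinv i.1 * z) * k.2) * W.Sinv k.1) := by
      rw [Finset.sum_mul]
      refine Finset.sum_congr rfl fun i _ => ?_
      conv_lhs => rw [mul_assoc, ← S1 (W.Sinv i.1 * z), Finset.mul_sum]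
    have h2side : z * (∑ i ∈ s, i.2 * W.Sinv i.1)
        = ∑ k ∈ s, ∑ i ∈ s, (i.2 * (W.lact lam) (W.Sinv i.1 * (z * k.2))) * W.Sinv k.1 := by
      rw [Finset.mul_sum]
      refine Finset.sum_congr rfl fun k _ => ?_
      conv_lhs => rw [← mul_assoc, ← S2 (z * k.2), Finset.sum_mul]
    rw [h1side, h2side, Finset.sum_comm]
    refine Finset.sum_congr rfl fun k _ => Finset.sum_congr rfl fun i _ => ?_
    rw [mul_assoc (W.Sinv i.1) z k.2]
    exact (mul_assoc _ _ _).symm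
  have hspair : W.Δ (1 : A)
      = (TensorProduct.comm ℂ A A) ((TensorProduct.map W.S W.S) (W.Δ (1 : A))) := by
    have h := W.S_anticomul 1
    rwa [aux_S_one W] at h
  have hkz : ∀ w : A ⊗[ℂ] A,
      W.Sinv ((TensorProduct.lid ℂ A)
        ((TensorProduct.map (W.ε ∘ₗ LinearMap.mulRight ℂ l) LinearMap.id)
          ((TensorProduct.comm ℂ A A) ((TensorProduct.map W.S W.S) w))))
      = (TensorProduct.rid ℂ A)
          ((TensorProduct.map LinearMap.id (W.ε ∘ₗ LinearMap.mulRight ℂ l ∘ₗ W.S)) w) := by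
    intro w
    induction w using TensorProduct.induction_on with
    | zero => simp
    | tmul p q => simp [W.Sinv_S]
    | add p q hp hq => simp only [map_add, hp, hq]
  have hARwit : W.swIdSinv l = (TensorProduct.rid ℂ A)
      ((TensorProduct.map LinearMap.id (W.ε ∘ₗ LinearMap.mulRight ℂ l ∘ₗ W.S)) (W.Δ 1)) := by
    have h5 : W.Sinv (LinearMap.mul' ℂ A ((TensorProduct.map LinearMap.id W.S) (W.Δ l)))
        = W.swIdSinv l := by
      rw [hInd, hl]
      simp only [map_sum, TensorProduct.map_tmul, LinearMap.mul'_apply, LinearMap.id_coe, id_eq]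
      exact Finset.sum_congr rfl fun i _ => by rw [aux_Sinv_antimul, W.Sinv_S]
    rw [← h5, W.antipode_right l]
    conv_lhs => rw [hspair]
    exact hkz (W.Δ 1)
  refine ⟨fun a => ?_, fun a => ?_, ⟨W.ε ∘ₗ LinearMap.mulRight ℂ l ∘ₗ W.S, hARwit⟩, hcen⟩
  · rw [hl]
    simp only [map_sum, TensorProduct.comm_tmul, TensorProduct.map_tmul, LinearMap.mul'_apply,
      LinearMap.coe_comp, Function.comp_apply, LinearMap.mulLeft_apply]
    exact S1 a
  · rw [hl]
    simp only [map_sum, TensorProduct.comm_tmul, TensorProduct.map_tmul, LinearMap.mul'_apply,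
      LinearMap.coe_comp, Function.comp_apply, LinearMap.mulRight_apply, LinearMap.id_coe, id_eq]
    exact S2 a
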